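/- A compact graph has at most three vertices of degree at least 3. -/

import Mathlib

/-- `G` has no even cycles. -/
def SimpleGraph.NoEvenCycles {V : Type*} (G : SimpleGraph V) : Prop :=
  ∀ ⦃v : V⦄ (c : G.Walk v v), c.IsCycle → ¬ Even c.length

/-- The odd-cycle condition: every two cycles either share a vertex or are joined by an
edge of `G`. -/
def SimpleGraph.OddCycleCondition {V : Type*} (G : SimpleGraph V) : Prop :=
  ∀ ⦃u v : V⦄ (c₁ : G.Walk u u) (c₂ : G.Walk v v), c₁.IsCycle → c₂.IsCycle →
    (∃ x, x ∈ c₁.support ∧ x ∈ c₂.support) ∨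
    (∃ x y, x ∈ c₁.support ∧ y ∈ c₂.support ∧ G.Adj x y)

/-- A compact graph: a finite connected simple graph in which every vertex has degree
greater than one, with no even cycles, satisfying the odd-cycle condition. -/
def SimpleGraph.IsCompact {V : Type*} [Fintype V] (G : SimpleGraph V)
    [DecidableRel G.Adj] : Prop :=
  G.Connected ∧ (∀ v : V, 2 ≤ G.degree v) ∧ G.NoEvenCycles ∧ G.OddCycleCondition

open SimpleGraph Walk List

namespace CompactAux

variable {V : Type*} [DecidableEq V] {G : SimpleGraph V}

lemma end_mem_tail_support' {a v : V} (p : G.Walk a v) (hn : p.length ≠ 0) :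
    v ∈ p.support.tail := by
  cases p with
  | nil => simp at hn
  | cons h q => simpa using q.end_mem_support

lemma end_mem_tail_support {v : V} (c : G.Walk v v) (hn : c.length ≠ 0) :
    v ∈ c.support.tail :=
  end_mem_tail_support' c hn

lemma mem_support_iff_mem_tail {v : V} (c : G.Walk v v) (hn : c.length ≠ 0) (x : V) :
    x ∈ c.support ↔ x ∈ c.support.tail := by
  constructor
  · intro hx
    rw [c.support_eq_cons, List.mem_cons] at hx
    rcases hx with hx | hx
    · exact hx ▸ end_mem_tail_support c hn
    · exact hx
  · intro hx
    rw [c.support_eq_cons]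
    exact List.mem_cons_of_mem _ hx

lemma length_rotate {v u : V} (c : G.Walk v v) (h : u ∈ c.support) :
    (c.rotate _ h).length = c.length := by
  have := (c.rotate_edges _ h).perm.length_eq
  rwa [length_edges, length_edges] at this

lemma mem_support_rotate {v u : V} (c : G.Walk v v) (h : u ∈ c.support) (hn : c.length ≠ 0)
    (x : V) : x ∈ (c.rotate _ h).support ↔ x ∈ c.support := by
  rw [mem_support_iff_mem_tail c hn, mem_support_iff_mem_tail (c.rotate _ h) (by rw [length_rotate]; exact hn)]
  exact (c.support_rotate _ h).mem_iff

lemma edge_end_eq {s t z z' : V} {p : G.Walk s t} (hp : p.IsPath) (h : s(z, t) ∈ p.edges)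
    (h' : s(z', t) ∈ p.edges) : z = z' := by
  induction p with
  | nil => simp at h
  | @cons a b c hadj q ih =>
    rw [Walk.edges_cons, List.mem_cons] at h h'
    rw [Walk.cons_isPath_iff] at hp
    rcases h with h | h <;> rcases h' with h' | h'
    · rw [← h'] at h
      rw [Sym2.eq_iff] at h
      rcases h with ⟨h1, h2⟩ | ⟨h1, h2⟩
      · exact h1
      · exact h1.trans h2
    · -- s(z,t) = s(a,b), s(z',t) ∈ q.edges
      rw [Sym2.eq_iff] at h
      rcases h with ⟨hz, htb⟩ | ⟨hz, hta⟩
      · subst htb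
        -- q : G.Walk t t is a path, so nil
        have : q = Walk.nil := (Walk.isPath_iff_eq_nil (p := q)).mp hp.1
        subst this
        simp at h'
      · subst hta
        exact absurd (q.end_mem_support) (by simpa using hp.2)
    · rw [Sym2.eq_iff] at h'
      rcases h' with ⟨hz, htb⟩ | ⟨hz, hta⟩
      · subst htb
        have : q = Walk.nil := (Walk.isPath_iff_eq_nil (p := q)).mp hp.1
        subst this
        simp at h
      · subst hta
        exact absurd (q.end_mem_support) (by simpa using hp.2)
    · exact ih hp.1 h h'

lemma edge_start_end {u v : V} {p : G.Walk u v} (hp : p.IsPath) (h : s(u, v) ∈ p.edges) :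
    p.length = 1 := by
  induction p with
  | nil => simp at h
  | @cons a b c hadj q ih =>
    rw [Walk.edges_cons, List.mem_cons] at h
    rw [Walk.cons_isPath_iff] at hp
    rcases h with h | h
    · rw [Sym2.eq_iff] at h
      rcases h with ⟨-, hcb⟩ | ⟨hab, hca⟩
      · subst hcb
        have : q = Walk.nil := (Walk.isPath_iff_eq_nil (p := q)).mp hp.1
        subst this
        simp
      · exact absurd hadj (hab ▸ G.irrefl)
    · exact absurd (q.fst_mem_support_of_mem_edges h) hp.2

lemma path_append_path {u v w : V} {p : G.Walk u v} {q : G.Walk v w} (hp : p.IsPath)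
    (hq : q.IsPath)
    (hshare : ∀ x, x ∈ p.support → x ∈ q.support → x = v) : (p.append q).IsPath := by
  rw [Walk.isPath_def, Walk.support_append]
  apply List.Nodup.append (hp.support_nodup)
  · exact (List.nodup_cons.mp (by rw [← q.support_eq_cons]; exact hq.support_nodup)).2
  · intro x hx hx'
    have := hshare x hx (List.mem_of_mem_tail hx')
    subst this
    have := (List.nodup_cons.mp (by rw [← q.support_eq_cons]; exact hq.support_nodup)).1
    exact this hx'

lemma glue_isCycle {u v : V} {p : G.Walk u v} {q : G.Walk v u} (hp : p.IsPath) (hq : q.IsPath)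
    (huv : u ≠ v) (hlen : 2 ≤ p.length)
    (hshare : ∀ x, x ∈ p.support → x ∈ q.support → x = u ∨ x = v) :
    (p.append q).IsCycle := by
  have hqtail : q.support.Nodup := hq.support_nodup
  have hptail : p.support.Nodup := hp.support_nodup
  rw [Walk.isCycle_def]
  refine ⟨?_, ?_, ?_⟩
  · rw [Walk.isTrail_def, Walk.edges_append]
    apply List.Nodup.append hp.isTrail.edges_nodup hq.isTrail.edges_nodup
    intro e he he'
    induction e using Sym2.ind with
    | _ x y =>
      have hadj : G.Adj x y := p.adj_of_mem_edges he
      have hxp : x ∈ p.support := p.fst_mem_support_of_mem_edges he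
      have hyp : y ∈ p.support := p.snd_mem_support_of_mem_edges he
      have hxq : x ∈ q.support := q.fst_mem_support_of_mem_edges he'
      have hyq : y ∈ q.support := q.snd_mem_support_of_mem_edges he'
      have hx := hshare x hxp hxq
      have hy := hshare y hyp hyq
      have hxy := hadj.ne
      have : s(x, y) = s(u, v) := by
        rcases hx with hx | hx <;> rcases hy with hy | hy <;> subst hx <;> subst hy
        · exact absurd rfl hxy
        · rfl
        · exact Sym2.eq_swap
        · exact absurd rfl hxy
      rw [this] at he
      have := edge_start_end hp he
      omega
  · intro hnil
    have : (p.append q).length = 0 := by rw [hnil]; rfl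
    rw [Walk.length_append] at this
    omega
  · rw [Walk.support_append, p.support_eq_cons, List.cons_append, List.tail_cons]
    apply List.Nodup.append
    · exact (List.nodup_cons.mp (by rw [← p.support_eq_cons]; exact hptail)).2
    · exact (List.nodup_cons.mp (by rw [← q.support_eq_cons]; exact hqtail)).2
    · intro x hx hx'
      have hx1 : x ∈ p.support := by rw [p.support_eq_cons]; exact List.mem_cons_of_mem _ hx
      have hx2 : x ∈ q.support := List.mem_of_mem_tail hx'
      rcases hshare x hx1 hx2 with h | h
      · subst h
        exact (List.nodup_cons.mp (by rw [← p.support_eq_cons]; exact hptail)).1 hx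
      · subst h
        exact (List.nodup_cons.mp (by rw [← q.support_eq_cons]; exact hqtail)).1 hx'



lemma length_ne_zero_of_ne {a v : V} (p : G.Walk a v) (h : a ≠ v) : p.length ≠ 0 :=
  fun h0 => h (Walk.eq_of_length_eq_zero h0)

lemma edges_of_length_one {a v : V} {p : G.Walk a v} (h : p.length = 1) :
    s(a, v) ∈ p.edges := by
  cases p with
  | nil => simp at h
  | cons hadj q =>
    cases q with
    | nil => simp
    | cons h2 q2 => simp [Walk.length_cons] at h

/-- Splitting a cycle based at `u` at another vertex `x` yields two paths
meeting only at `u` and `x`. -/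
lemma cycle_split {u x : V} {c : G.Walk u u} (hc : c.IsCycle) (hx : x ∈ c.support)
    (hxu : x ≠ u) :
    (c.takeUntil x hx).IsPath ∧ (c.dropUntil x hx).IsPath ∧
      (∀ y, y ∈ (c.takeUntil x hx).support → y ∈ (c.dropUntil x hx).support →
        y = u ∨ y = x) := by
  have hspec := c.take_spec hx
  have hsupp : c.support = (c.takeUntil x hx).support ++ (c.dropUntil x hx).support.tail := by
    conv_lhs => rw [← hspec]
    exact Walk.support_append _ _
  have hA : (c.takeUntil x hx).support = u :: (c.takeUntil x hx).support.tail :=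
    (c.takeUntil x hx).support_eq_cons
  have htail : c.support.tail =
      (c.takeUntil x hx).support.tail ++ (c.dropUntil x hx).support.tail := by
    have := hsupp
    rw [c.support_eq_cons, hA, List.cons_append] at this
    exact (List.cons.injEq _ _ _ _).mp this |>.2
  have hnd : ((c.takeUntil x hx).support.tail ++ (c.dropUntil x hx).support.tail).Nodup := by
    rw [← htail]; exact hc.2
  have d1 := hnd.of_append_left
  have d2 := hnd.of_append_right
  have disj := List.disjoint_of_nodup_append hnd
  have hxA : x ∈ (c.takeUntil x hx).support.tail :=
    end_mem_tail_support' _ (length_ne_zero_of_ne _ (Ne.symm hxu))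
  have huB : u ∈ (c.dropUntil x hx).support.tail :=
    end_mem_tail_support' _ (length_ne_zero_of_ne _ hxu)
  have huA : u ∉ (c.takeUntil x hx).support.tail := fun h => disj h huB
  have hxB : x ∉ (c.dropUntil x hx).support.tail := fun h => disj hxA h
  refine ⟨?_, ?_, ?_⟩
  · rw [Walk.isPath_def, hA]
    exact List.nodup_cons.mpr ⟨huA, d1⟩
  · rw [Walk.isPath_def, (c.dropUntil x hx).support_eq_cons]
    exact List.nodup_cons.mpr ⟨hxB, d2⟩
  · intro y hyA hyB
    rw [hA, List.mem_cons] at hyA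
    rw [(c.dropUntil x hx).support_eq_cons, List.mem_cons] at hyB
    rcases hyA with rfl | hyA
    · exact Or.inl rfl
    · rcases hyB with rfl | hyB
      · exact Or.inr rfl
      · exact absurd hyB (disj hyA)

/-- First vertex on a walk satisfying a predicate. -/
lemma first_hit {s t : V} (W : G.Walk s t) (P : V → Prop) (h : ∃ x ∈ W.support, P x) :
    ∃ p, P p ∧ ∃ (W1 : G.Walk s p) (W2 : G.Walk p t), W1.append W2 = W ∧
      ∀ y ∈ W1.support, P y → y = p := by
  induction W with
  | nil =>
    simp only [Walk.support_nil, List.mem_singleton, exists_eq_left] at h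
    exact ⟨_, h, Walk.nil, Walk.nil, rfl, fun y hy _ => by simpa using hy⟩
  | @cons a b c hadj q ih =>
    by_cases hPa : P a
    · exact ⟨a, hPa, Walk.nil, Walk.cons hadj q, rfl, fun y hy _ => by simpa using hy⟩
    · obtain ⟨x, hx, hPx⟩ := h
      rw [Walk.support_cons, List.mem_cons] at hx
      have hxq : x ∈ q.support := by
        rcases hx with rfl | hx
        · exact absurd hPx hPa
        · exact hx
      obtain ⟨p, hPp, W1, W2, happ, hfirst⟩ := ih ⟨x, hxq, hPx⟩
      refine ⟨p, hPp, Walk.cons hadj W1, W2, by rw [Walk.cons_append, happ], ?_⟩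
      intro y hy hPy
      rw [Walk.support_cons, List.mem_cons] at hy
      rcases hy with rfl | hy
      · exact absurd hPy hPa
      · exact hfirst y hy hPy



/-- A chord of a cycle yields an even cycle: contradiction. -/
lemma chord_contra (hne : G.NoEvenCycles) {q0 x y : V} {D : G.Walk q0 q0} (hD : D.IsCycle)
    (hadj : G.Adj x y) (hx : x ∈ D.support) (hy : y ∈ D.support) (hxy : s(x, y) ∉ D.edges) :
    False := by
  have hDlen : D.length ≠ 0 := by have := hD.three_le_length; omega
  set D' := D.rotate _ hx with hD'def
  have hD' : D'.IsCycle := hD.rotate hx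
  have hy' : y ∈ D'.support := (mem_support_rotate D hx hDlen y).mpr hy
  have hyx : y ≠ x := hadj.ne'
  obtain ⟨hp1, hp2, hsh⟩ := cycle_split hD' hy' hyx
  set A1 := D'.takeUntil y hy' with hA1
  set A2 := D'.dropUntil y hy' with hA2
  have hlensum : A1.length + A2.length = D.length := by
    have := congrArg Walk.length (D'.take_spec hy')
    rw [Walk.length_append] at this
    rw [this, hD'def, length_rotate]
  have hedgesD : ∀ e, e ∈ D'.edges ↔ e ∈ D.edges := fun e => (D.rotate_edges _ hx).mem_iff
  have hl1 : 2 ≤ A1.length := by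
    have h1 : A1.length ≠ 0 := length_ne_zero_of_ne _ (Ne.symm hyx)
    rcases Nat.lt_or_ge A1.length 2 with h | h
    · interval_cases hl : A1.length
      · exact absurd rfl h1
      · exact absurd ((hedgesD _).mp (D'.edges_takeUntil_subset hy' (edges_of_length_one hl))) hxy
    · exact h
  have hl2 : 2 ≤ A2.length := by
    have h1 : A2.length ≠ 0 := length_ne_zero_of_ne _ hyx
    rcases Nat.lt_or_ge A2.length 2 with h | h
    · interval_cases hl : A2.length
      · exact absurd rfl h1
      · exact absurd ((hedgesD _).mp (D'.edges_dropUntil_subset hy' (edges_of_length_one hl)))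
          (by rwa [Sym2.eq_swap] at hxy)
    · exact h
  have hq1 : (Walk.cons hadj.symm (Walk.nil : G.Walk x x)).IsPath := by
    rw [Walk.cons_isPath_iff]
    exact ⟨Walk.IsPath.nil, by simpa using hyx⟩
  have hc1 : (A1.append (Walk.cons hadj.symm Walk.nil)).IsCycle := by
    apply glue_isCycle hp1 hq1 hyx.symm hl1
    intro z hz hz'
    simp only [Walk.support_cons, Walk.support_nil, List.mem_cons, List.mem_singleton] at hz'
    tauto
  have hq2 : (Walk.cons hadj (Walk.nil : G.Walk y y)).IsPath := by
    rw [Walk.cons_isPath_iff]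
    exact ⟨Walk.IsPath.nil, by simpa using hadj.ne⟩
  have hc2 : (A2.append (Walk.cons hadj Walk.nil)).IsCycle := by
    apply glue_isCycle hp2 hq2 hyx hl2
    intro z hz hz'
    simp only [Walk.support_cons, Walk.support_nil, List.mem_cons, List.mem_singleton] at hz'
    tauto
  have e1 := hne _ hc1
  have e2 := hne _ hc2
  have eD := hne _ hD
  rw [Walk.length_append] at e1 e2
  simp only [Walk.length_cons, Walk.length_nil] at e1 e2
  rcases Nat.even_or_odd A1.length with h | h
  · rcases Nat.even_or_odd A2.length with h2 | h2
    · apply eD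
      rw [← hlensum]
      rcases h with ⟨k, hk⟩; rcases h2 with ⟨m, hm⟩
      exact ⟨k + m, by omega⟩
    · exact e2 (by rcases h2 with ⟨m, hm⟩; exact ⟨m + 1, by omega⟩)
  · exact e1 (by rcases h with ⟨k, hk⟩; exact ⟨k + 1, by omega⟩)

/-- Two distinct cycles sharing two vertices, with a vertex of one missing from
the other: contradiction (ear argument). -/
lemma ear_contra (hne : G.NoEvenCycles) {cf cx a b c : V} {F : G.Walk cf cf}
    {X : G.Walk cx cx}
    (hF : F.IsCycle) (hX : X.IsCycle) (haF : a ∈ F.support) (haX : a ∈ X.support)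
    (hbF : b ∈ F.support) (hbX : b ∈ X.support) (hab : a ≠ b)
    (hcF : c ∈ F.support) (hcX : c ∉ X.support) : False := by
  have hFlen : F.length ≠ 0 := by have := hF.three_le_length; omega
  have hXlen : X.length ≠ 0 := by have := hX.three_le_length; omega
  set F' := F.rotate _ hcF with hF'def
  have hF' : F'.IsCycle := hF.rotate hcF
  have haF' : a ∈ F'.support := (mem_support_rotate F hcF hFlen a).mpr haF
  have hbF' : b ∈ F'.support := (mem_support_rotate F hcF hFlen b).mpr hbF
  obtain ⟨p, hpX, W1, W2, happ, hfirst⟩ := first_hit F' (· ∈ X.support) ⟨a, haF', haX⟩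
  have hpc : p ≠ c := fun h => hcX (h ▸ hpX)
  have hW2len : W2.length ≠ 0 := length_ne_zero_of_ne _ hpc
  have hsupp : F'.support = W1.support ++ W2.support.tail := by
    conv_lhs => rw [← happ]
    exact Walk.support_append _ _
  have hW1cons : W1.support = c :: W1.support.tail := W1.support_eq_cons
  have htail : F'.support.tail = W1.support.tail ++ W2.support.tail := by
    have := hsupp
    rw [F'.support_eq_cons, hW1cons, List.cons_append] at this
    exact (List.cons.injEq _ _ _ _).mp this |>.2
  have hnd : (W1.support.tail ++ W2.support.tail).Nodup := by rw [← htail]; exact hF'.2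
  have d1 := hnd.of_append_left
  have d2 := hnd.of_append_right
  have disj := List.disjoint_of_nodup_append hnd
  have hcW2 : c ∈ W2.support.tail := end_mem_tail_support' _ hW2len
  have hW1path : W1.IsPath := by
    rw [Walk.isPath_def, hW1cons]
    exact List.nodup_cons.mpr ⟨fun h => disj h hcW2, d1⟩
  have hpW1tail : p ∈ W1.support.tail :=
    end_mem_tail_support' _ (length_ne_zero_of_ne _ (Ne.symm hpc))
  have hW2path : W2.IsPath := by
    rw [Walk.isPath_def, W2.support_eq_cons]
    exact List.nodup_cons.mpr ⟨fun h => disj hpW1tail h, d2⟩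
  -- second hit, from the other side
  have hdex : ∃ d ∈ W2.reverse.support, d ∈ X.support ∧ d ≠ p := by
    rcases eq_or_ne a p with rfl | hap
    · refine ⟨b, ?_, hbX, fun h => hab (h.symm ▸ rfl)⟩
      rw [Walk.support_reverse, List.mem_reverse]
      have : b ∈ W1.support ++ W2.support.tail := by rw [← hsupp]; exact hbF'
      rcases List.mem_append.mp this with h | h
      · exact absurd (hfirst b h hbX) (Ne.symm (fun h2 => hab (h2 ▸ rfl)))
      · exact List.mem_of_mem_tail h
    · refine ⟨a, ?_, haX, hap⟩
      rw [Walk.support_reverse, List.mem_reverse]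
      have : a ∈ W1.support ++ W2.support.tail := by rw [← hsupp]; exact haF'
      rcases List.mem_append.mp this with h | h
      · exact absurd (hfirst a h haX) hap
      · exact List.mem_of_mem_tail h
  obtain ⟨q, ⟨hqX, hqp⟩, V1, V2, happ2, hfirst2⟩ :=
    first_hit W2.reverse (fun z => z ∈ X.support ∧ z ≠ p) hdex
  have hqc : q ≠ c := fun h => hcX (h ▸ hqX)
  have hrevnodup : W2.reverse.support.Nodup := by
    rw [Walk.support_reverse]
    exact List.nodup_reverse.mpr hW2path.support_nodup
  have hsupp2 : W2.reverse.support = V1.support ++ V2.support.tail := by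
    conv_lhs => rw [← happ2]
    exact Walk.support_append _ _
  have hV1nodup : V1.support.Nodup := by
    have := hsupp2 ▸ hrevnodup
    exact this.of_append_left
  have hV1path : V1.IsPath := (Walk.isPath_def _).mpr hV1nodup
  have hpV2 : p ∈ V2.support.tail := end_mem_tail_support' _ (length_ne_zero_of_ne _ hqp)
  have hpV1 : p ∉ V1.support := by
    intro h
    exact (List.disjoint_of_nodup_append (hsupp2 ▸ hrevnodup)) h hpV2
  -- V1 members in X equal q
  have hV1X : ∀ y ∈ V1.support, y ∈ X.support → y = q := by
    intro y hy hyX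
    exact hfirst2 y hy ⟨hyX, fun h => hpV1 (h ▸ hy)⟩
  -- R : the ear from p to q through c
  have hV1sub : ∀ y ∈ V1.support, y ∈ W2.support := by
    intro y hy
    have : y ∈ W2.reverse.support := by rw [hsupp2]; exact List.mem_append_left _ hy
    rwa [Walk.support_reverse, List.mem_reverse] at this
  have hshR : ∀ y, y ∈ W1.reverse.support → y ∈ V1.support → y = c := by
    intro y hy hy'
    rw [Walk.support_reverse, List.mem_reverse] at hy
    have hyW2 : y ∈ W2.support := hV1sub y hy'
    rw [hW1cons, List.mem_cons] at hy
    rcases hy with rfl | hy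
    · rfl
    · rw [W2.support_eq_cons, List.mem_cons] at hyW2
      rcases hyW2 with rfl | hyW2
      · exact absurd hy' hpV1
      · exact absurd hyW2 (disj hy)
  set R := W1.reverse.append V1 with hRdef
  have hRpath : R.IsPath := path_append_path hW1path.reverse hV1path hshR
  have hcR : c ∈ R.support := by
    rw [Walk.mem_support_append_iff]
    left
    rw [Walk.support_reverse, List.mem_reverse]
    exact W1.start_mem_support
  have hRX : ∀ y ∈ R.support, y ∈ X.support → y = p ∨ y = q := by
    intro y hy hyX
    rw [Walk.mem_support_append_iff] at hy
    rcases hy with hy | hy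
    · rw [Walk.support_reverse, List.mem_reverse] at hy
      exact Or.inl (hfirst y hy hyX)
    · exact Or.inr (hV1X y hy hyX)
  have hpq : p ≠ q := Ne.symm hqp
  have hRlen : 2 ≤ R.length := by
    have h3 : [p, c, q].Subperm R.support := by
      apply List.subperm_of_subset
      · simp [hpc, hpq, hqc.symm]
      · intro z hz
        simp only [List.mem_cons, List.mem_singleton, List.not_mem_nil, or_false] at hz
        rcases hz with rfl | rfl | rfl
        · exact R.start_mem_support
        · exact hcR
        · exact R.end_mem_support
    have := h3.length_le
    have h4 := R.length_support
    simp at this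
    omega
  -- split X at p and q
  set X' := X.rotate _ hpX with hX'def
  have hX' : X'.IsCycle := hX.rotate hpX
  have hqX' : q ∈ X'.support := (mem_support_rotate X hpX hXlen q).mpr hqX
  obtain ⟨hxp1, hxp2, hxsh⟩ := cycle_split hX' hqX' (Ne.symm hpq)
  set B1 := X'.takeUntil q hqX' with hB1
  set B2 := X'.dropUntil q hqX' with hB2
  have hlensum : B1.length + B2.length = X.length := by
    have := congrArg Walk.length (X'.take_spec hqX')
    rw [Walk.length_append] at this
    rw [this, hX'def, length_rotate]
  have hB1X : ∀ y ∈ B1.support, y ∈ X.support := fun y hy =>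
    (mem_support_rotate X hpX hXlen y).mp (X'.support_takeUntil_subset hqX' hy)
  have hB2X : ∀ y ∈ B2.support, y ∈ X.support := fun y hy =>
    (mem_support_rotate X hpX hXlen y).mp (X'.support_dropUntil_subset hqX' hy)
  have hc1 : (R.append B2).IsCycle := by
    apply glue_isCycle hRpath hxp2 hpq hRlen
    intro z hz hz'
    exact hRX z hz (hB2X z hz')
  have hc2 : (R.append B1.reverse).IsCycle := by
    apply glue_isCycle hRpath hxp1.reverse hpq hRlen
    intro z hz hz'
    rw [Walk.support_reverse, List.mem_reverse] at hz'
    exact hRX z hz (hB1X z hz')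
  have e1 := hne _ hc1
  have e2 := hne _ hc2
  have eX := hne _ hX
  rw [Walk.length_append] at e1 e2
  rw [Walk.length_reverse] at e2
  rcases Nat.even_or_odd R.length with hr | hr
  · rcases Nat.even_or_odd B1.length with h1 | h1
    · exact e2 (by rcases hr with ⟨k, hk⟩; rcases h1 with ⟨m, hm⟩; exact ⟨k + m, by omega⟩)
    · rcases Nat.even_or_odd B2.length with h2 | h2
      · exact e1 (by rcases hr with ⟨k, hk⟩; rcases h2 with ⟨m, hm⟩; exact ⟨k + m, by omega⟩)
      · apply eX
        rw [← hlensum]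
        rcases h1 with ⟨k, hk⟩; rcases h2 with ⟨m, hm⟩
        exact ⟨k + m + 1, by omega⟩
  · rcases Nat.even_or_odd B1.length with h1 | h1
    · rcases Nat.even_or_odd B2.length with h2 | h2
      · apply eX
        rw [← hlensum]
        rcases h1 with ⟨k, hk⟩; rcases h2 with ⟨m, hm⟩
        exact ⟨k + m, by omega⟩
      · exact e1 (by rcases hr with ⟨k, hk⟩; rcases h2 with ⟨m, hm⟩; exact ⟨k + m + 1, by omega⟩)
    · exact e2 (by rcases hr with ⟨k, hk⟩; rcases h1 with ⟨m, hm⟩; exact ⟨k + m + 1, by omega⟩)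

/-- Master lemma: two cycles sharing two distinct vertices, where the first has an
edge not belonging to the second: contradiction. -/
lemma two_shared_contra (hne : G.NoEvenCycles) {cf cx a b : V} {F : G.Walk cf cf}
    {X : G.Walk cx cx} (hF : F.IsCycle) (hX : X.IsCycle)
    (haF : a ∈ F.support) (haX : a ∈ X.support)
    (hbF : b ∈ F.support) (hbX : b ∈ X.support) (hab : a ≠ b)
    (hedge : ∃ e ∈ F.edges, e ∉ X.edges) : False := by
  by_cases hsub : ∀ z ∈ F.support, z ∈ X.support
  · obtain ⟨e, heF, heX⟩ := hedge
    induction e using Sym2.ind with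
    | _ x y =>
      exact chord_contra hne hX (F.adj_of_mem_edges heF)
        (hsub x (F.fst_mem_support_of_mem_edges heF))
        (hsub y (F.snd_mem_support_of_mem_edges heF)) heX
  · push_neg at hsub
    obtain ⟨c, hcF, hcX⟩ := hsub
    exact ear_contra hne hF hX haF haX hbF hbX hab hcF hcX


section Finite

variable [Fintype V] [DecidableRel G.Adj]

/-- In a region `S` closed under taking neighbours (except at `b`), with minimum degree 2,
there is a cycle contained in `S`. -/
lemma region_cycle (hdeg : ∀ y : V, 2 ≤ G.degree y) (S : Set V) (b : V) (hb : b ∈ S)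
    (hcl : ∀ y ∈ S, y ≠ b → ∀ z, G.Adj y z → z ∈ S)
    (hbn : ∃ z, G.Adj b z ∧ z ∈ S) :
    ∃ (w : V) (Z : G.Walk w w), Z.IsCycle ∧ ∀ x ∈ Z.support, x ∈ S := by
  classical
  set L : Set ℕ := {n | ∃ (s t : V) (p : G.Walk s t), p.IsPath ∧ (∀ x ∈ p.support, x ∈ S) ∧
    p.length = n} with hL
  have hne0 : 0 ∈ L := ⟨b, b, Walk.nil, Walk.IsPath.nil, by simpa using hb, rfl⟩
  have hbdd : BddAbove L := by
    refine ⟨Fintype.card V, ?_⟩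
    rintro n ⟨s, t, p, hp, -, hl⟩
    exact hl ▸ le_of_lt hp.length_lt
  have h1L : 1 ∈ L := by
    obtain ⟨z, hz, hzS⟩ := hbn
    exact ⟨b, z, Walk.cons hz Walk.nil, by
      rw [Walk.cons_isPath_iff]; exact ⟨Walk.IsPath.nil, by simpa using hz.ne⟩, by
      intro x hx
      simp only [Walk.support_cons, Walk.support_nil, List.mem_cons, List.mem_singleton, List.not_mem_nil, or_false] at hx
      rcases hx with rfl | hx
      · exact hb
      · exact hx ▸ hzS, rfl⟩
  set k := sSup L with hkdef
  have hk : k ∈ L := Nat.sSup_mem ⟨0, hne0⟩ hbdd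
  have hk1 : 1 ≤ k := le_csSup hbdd h1L
  obtain ⟨s, t, p, hp, hpsub, hpl⟩ := hk
  -- arrange that the end is not `b`
  obtain ⟨s', t', q, hq, hqsub, hql, htb⟩ : ∃ (s' t' : V) (q : G.Walk s' t'), q.IsPath ∧
      (∀ x ∈ q.support, x ∈ S) ∧ q.length = k ∧ t' ≠ b := by
    have hst : s ≠ t := by
      intro h
      subst h
      have := (Walk.isPath_iff_eq_nil (p := p)).mp hp
      rw [this] at hpl
      simp at hpl
      omega
    rcases eq_or_ne t b with rfl | htb
    · exact ⟨t, s, p.reverse, hp.reverse, fun x hx => hpsub x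
        (by rwa [Walk.support_reverse, List.mem_reverse] at hx),
        by rw [Walk.length_reverse]; exact hpl, fun h => hst h⟩
    · exact ⟨s, t, p, hp, hpsub, hpl, htb⟩
  have ht'S : t' ∈ S := hqsub t' q.end_mem_support
  -- all neighbours of t' lie on q
  have hnbr : ∀ z, G.Adj t' z → z ∈ q.support := by
    intro z hz
    by_contra hzq
    have hzS : z ∈ S := hcl t' ht'S htb z hz
    have : (q.append (Walk.cons hz Walk.nil)).IsPath := by
      apply path_append_path hq
      · rw [Walk.cons_isPath_iff]
        exact ⟨Walk.IsPath.nil, by simpa using hz.ne⟩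
      · intro y hy hy'
        simp only [Walk.support_cons, Walk.support_nil, List.mem_cons, List.mem_singleton, List.not_mem_nil, or_false] at hy'
        rcases hy' with rfl | hy'
        · rfl
        · exact absurd (hy' ▸ hy) hzq
    have hmem : k + 1 ∈ L := by
      refine ⟨s', z, q.append (Walk.cons hz Walk.nil), this, ?_, ?_⟩
      · intro y hy
        rw [Walk.mem_support_append_iff] at hy
        rcases hy with hy | hy
        · exact hqsub y hy
        · simp only [Walk.support_cons, Walk.support_nil, List.mem_cons, List.mem_singleton, List.not_mem_nil, or_false] at hy
          rcases hy with rfl | hy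
          · exact ht'S
          · exact hy ▸ hzS
      · rw [Walk.length_append]
        simp [hql]
    have := le_csSup hbdd hmem
    omega
  -- two distinct neighbours
  obtain ⟨z1, hz1, z2, hz2, hz12⟩ := Finset.one_lt_card.mp (by
    rw [card_neighborFinset_eq_degree]; have := hdeg t'; omega :
    1 < (G.neighborFinset t').card)
  rw [mem_neighborFinset] at hz1 hz2
  -- choose one whose closing edge is not already on q
  obtain ⟨z, hz, hze⟩ : ∃ z, G.Adj t' z ∧ s(z, t') ∉ q.edges := by
    by_cases h1 : s(z1, t') ∈ q.edges
    · refine ⟨z2, hz2, fun h2 => hz12 (edge_end_eq hq h1 h2)⟩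
    · exact ⟨z1, hz1, h1⟩
  have hzsupp : z ∈ q.support := hnbr z hz
  set seg := q.dropUntil z hzsupp with hseg
  have hsegpath : seg.IsPath := hq.dropUntil hzsupp
  have hsegedges : ∀ e ∈ seg.edges, e ∈ q.edges := fun e he => q.edges_dropUntil_subset hzsupp he
  have hseglen : 2 ≤ seg.length := by
    have hne : seg.length ≠ 0 := length_ne_zero_of_ne _ hz.ne'
    rcases Nat.lt_or_ge seg.length 2 with h | h
    · interval_cases hl : seg.length
      · exact absurd rfl hne
      · exact absurd (hsegedges _ (edges_of_length_one hl)) hze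
    · exact h
  have hcyc : (seg.append (Walk.cons hz Walk.nil)).IsCycle := by
    apply glue_isCycle hsegpath (by
      rw [Walk.cons_isPath_iff]; exact ⟨Walk.IsPath.nil, by simpa using hz.ne⟩) hz.ne' hseglen
    intro y hy hy'
    simp only [Walk.support_cons, Walk.support_nil, List.mem_cons, List.mem_singleton, List.not_mem_nil, or_false] at hy'
    tauto
  refine ⟨z, _, hcyc, ?_⟩
  intro y hy
  rw [Walk.mem_support_append_iff] at hy
  rcases hy with hy | hy
  · exact hqsub y (q.support_dropUntil_subset hzsupp hy)
  · simp only [Walk.support_cons, Walk.support_nil, List.mem_cons, List.mem_singleton, List.not_mem_nil, or_false] at hy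
    rcases hy with rfl | hy
    · exact ht'S
    · exact hy ▸ hqsub z (q.support_dropUntil_subset hzsupp seg.start_mem_support)

/-- In a compact-like graph, every vertex lies on a cycle. -/
lemma exists_cycle_through (hdeg : ∀ y : V, 2 ≤ G.degree y) (hocc : G.OddCycleCondition)
    (x : V) : ∃ c : G.Walk x x, c.IsCycle := by
  classical
  by_contra hx
  push_neg at hx
  -- pairwise: neighbours of x are not connected avoiding x
  have hpair : ∀ b1 b2, G.Adj x b1 → G.Adj x b2 → b1 ≠ b2 →
      ¬∃ w : G.Walk b1 b2, x ∉ w.support := by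
    rintro b1 b2 hb1 hb2 hne ⟨w, hw⟩
    have hxp : x ∉ w.bypass.support := fun h => hw (w.support_bypass_subset h)
    have hq : (w.bypass.append (Walk.cons hb2.symm Walk.nil)).IsPath := by
      apply path_append_path w.bypass_isPath
      · rw [Walk.cons_isPath_iff]
        exact ⟨Walk.IsPath.nil, by simpa using hb2.ne'⟩
      · intro y hy hy'
        simp only [Walk.support_cons, Walk.support_nil, List.mem_cons, List.mem_singleton, List.not_mem_nil, or_false] at hy'
        rcases hy' with rfl | hy'
        · rfl
        · exact absurd (hy' ▸ hy) hxp
    have hcyc : (Walk.cons hb1 (w.bypass.append (Walk.cons hb2.symm Walk.nil))).IsCycle := by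
      rw [Walk.cons_isCycle_iff]
      refine ⟨hq, ?_⟩
      rw [Walk.edges_append]
      intro hmem
      rcases List.mem_append.mp hmem with h | h
      · exact hxp (w.bypass.fst_mem_support_of_mem_edges h)
      · simp only [Walk.edges_cons, Walk.edges_nil, List.mem_singleton] at h
        rw [Sym2.eq_iff] at h
        rcases h with ⟨h1, h2⟩ | ⟨h1, h2⟩
        · exact hb1.ne' h2
        · exact hne h2
    exact hx _ hcyc
  obtain ⟨z1, hz1, z2, hz2, hz12⟩ := Finset.one_lt_card.mp (by
    rw [card_neighborFinset_eq_degree]; have := hdeg x; omega :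
    1 < (G.neighborFinset x).card)
  rw [mem_neighborFinset] at hz1 hz2
  -- regions
  have hreg : ∀ z0, G.Adj x z0 → ∃ (w : V) (Z : G.Walk w w), Z.IsCycle ∧
      ∀ y ∈ Z.support, ∃ ww : G.Walk z0 y, x ∉ ww.support := by
    intro z0 hz0
    apply region_cycle hdeg {y | ∃ ww : G.Walk z0 y, x ∉ ww.support} z0
      ⟨Walk.nil, by simpa using hz0.ne⟩
    · rintro y ⟨wy, hwy⟩ hyz0 z hyz
      rcases eq_or_ne z x with rfl | hzx
      · exact absurd ⟨wy, hwy⟩ (hpair z0 y hz0 hyz.symm (Ne.symm hyz0))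
      · refine ⟨wy.append (Walk.cons hyz Walk.nil), ?_⟩
        intro hmem
        rw [Walk.mem_support_append_iff] at hmem
        rcases hmem with h | h
        · exact hwy h
        · simp only [Walk.support_cons, Walk.support_nil, List.mem_cons, List.mem_singleton, List.not_mem_nil, or_false] at h
          rcases h with h | h
          · exact hwy (h ▸ wy.end_mem_support)
          · exact hzx h.symm
    · obtain ⟨w1, hw1, w2, hw2, hw12⟩ := Finset.one_lt_card.mp (by
        rw [card_neighborFinset_eq_degree]; have := hdeg z0; omega :
        1 < (G.neighborFinset z0).card)
      rw [mem_neighborFinset] at hw1 hw2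
      obtain ⟨w0, hw0, hw0x⟩ : ∃ w0, G.Adj z0 w0 ∧ w0 ≠ x := by
        rcases eq_or_ne w1 x with rfl | h
        · exact ⟨w2, hw2, fun h2 => hw12 h2.symm⟩
        · exact ⟨w1, hw1, h⟩
      refine ⟨w0, hw0, Walk.cons hw0 Walk.nil, ?_⟩
      intro hmem
      simp only [Walk.support_cons, Walk.support_nil, List.mem_cons, List.mem_singleton, List.not_mem_nil, or_false] at hmem
      rcases hmem with h | h
      · exact hz0.ne' h.symm
      · exact hw0x h.symm
  obtain ⟨w1, Z1, hZ1, hZ1S⟩ := hreg z1 hz1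
  obtain ⟨w2, Z2, hZ2, hZ2S⟩ := hreg z2 hz2
  have hdisj : ∀ y, (∃ ww : G.Walk z1 y, x ∉ ww.support) →
      (∃ ww : G.Walk z2 y, x ∉ ww.support) → False := by
    rintro y ⟨wa, hwa⟩ ⟨wb, hwb⟩
    apply hpair z1 z2 hz1 hz2 hz12
    refine ⟨wa.append wb.reverse, ?_⟩
    intro hmem
    rw [Walk.mem_support_append_iff] at hmem
    rcases hmem with h | h
    · exact hwa h
    · rw [Walk.support_reverse, List.mem_reverse] at h
      exact hwb h
  rcases hocc Z1 Z2 hZ1 hZ2 with ⟨y, hy1, hy2⟩ | ⟨a, b, ha, hb, hab⟩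
  · exact hdisj y (hZ1S y hy1) (hZ2S y hy2)
  · obtain ⟨wa, hwa⟩ := hZ1S a ha
    obtain ⟨wb, hwb⟩ := hZ2S b hb
    apply hdisj b
    · refine ⟨wa.append (Walk.cons hab Walk.nil), ?_⟩
      intro hmem
      rw [Walk.mem_support_append_iff] at hmem
      rcases hmem with h | h
      · exact hwa h
      · simp only [Walk.support_cons, Walk.support_nil, List.mem_cons, List.mem_singleton, List.not_mem_nil, or_false] at h
        rcases h with h | h
        · exact hwa (h ▸ wa.end_mem_support)
        · obtain ⟨wb2, hwb2⟩ := hZ2S b hb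
          exact hwb2 (by rw [h]; exact wb2.end_mem_support)
    · exact ⟨wb, hwb⟩

/-- A vertex of degree `≥ 3` on a cycle has an incident edge not on the cycle. -/
lemma exists_extra_edge {u : V} {c : G.Walk u u} (hc : c.IsCycle) (hdeg3 : 3 ≤ G.degree u) :
    ∃ b, G.Adj u b ∧ s(u, b) ∉ c.edges := by
  cases c with
  | nil => exact absurd hc Walk.IsCycle.not_of_nil
  | @cons _ w _ hadj q =>
    have hq : q.IsPath ∧ s(u, w) ∉ q.edges := (Walk.cons_isCycle_iff q hadj).mp hc
    by_contra hall
    push_neg at hall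
    have hP : ∀ b, G.Adj u b → b = w ∨ s(b, u) ∈ q.edges := by
      intro b hb
      have := hall b hb
      rw [Walk.edges_cons, List.mem_cons] at this
      rcases this with h | h
      · rw [Sym2.eq_iff] at h
        rcases h with ⟨-, h2⟩ | ⟨h1, -⟩
        · exact Or.inl h2
        · exact absurd hadj (h1 ▸ G.irrefl)
      · rw [Sym2.eq_swap] at h
        exact Or.inr h
    obtain ⟨b1, b2, b3, hb1, hb2, hb3, h12, h13, h23⟩ := Finset.two_lt_card_iff.mp (by
      rw [card_neighborFinset_eq_degree]; omega : 2 < (G.neighborFinset u).card)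
    rw [mem_neighborFinset] at hb1 hb2 hb3
    -- among three distinct neighbours, two differ from w, and they both give edges in q
    have key : ∀ a b : V, G.Adj u a → G.Adj u b → a ≠ b → a ≠ w → b ≠ w → False := by
      intro a b ha hb hab haw hbw
      rcases hP a ha with h | h
      · exact haw h
      rcases hP b hb with h' | h'
      · exact hbw h'
      exact hab (edge_end_eq hq.1 h h')
    rcases eq_or_ne b1 w with rfl | h1w
    · exact key b2 b3 hb2 hb3 h23 (Ne.symm h12) (Ne.symm h13)
    · rcases eq_or_ne b2 w with rfl | h2w
      · exact key b1 b3 hb1 hb3 h13 h1w (Ne.symm h23)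
      · exact key b1 b2 hb1 hb2 h12 h1w h2w

end Finite

/-- Any walk from `y` to `u` yields reachability to `u` or to `a` in `G` minus the
edge `s(u,a)`. -/
lemma reach_one_side' {u a : V} : ∀ {y t : V} (_ : G.Walk y t),
    (G \ fromEdgeSet {s(u, a)}).Reachable y t ∨ (G \ fromEdgeSet {s(u, a)}).Reachable y u ∨
      (G \ fromEdgeSet {s(u, a)}).Reachable y a := by
  intro y t w
  induction w with
  | nil => exact Or.inl (Reachable.refl _)
  | @cons p1 p2 _ hadj q ih =>
    by_cases he : s(p1, p2) = s(u, a)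
    · rw [Sym2.eq_iff] at he
      rcases he with ⟨rfl, rfl⟩ | ⟨rfl, rfl⟩
      · exact Or.inr (Or.inl (Reachable.refl _))
      · exact Or.inr (Or.inr (Reachable.refl _))
    · have hadj' : (G \ fromEdgeSet {s(u, a)}).Adj p1 p2 := by
        rw [sdiff_adj]
        refine ⟨hadj, ?_⟩
        rw [fromEdgeSet_adj]
        rintro ⟨h1, -⟩
        exact he h1
      rcases ih with h | h | h
      · exact Or.inl (hadj'.reachable.trans h)
      · exact Or.inr (Or.inl (hadj'.reachable.trans h))
      · exact Or.inr (Or.inr (hadj'.reachable.trans h))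

lemma reach_one_side {u a : V} {y : V} (w : G.Walk y u) :
    (G \ fromEdgeSet {s(u, a)}).Reachable y u ∨ (G \ fromEdgeSet {s(u, a)}).Reachable y a := by
  rcases reach_one_side' (u := u) (a := a) w with h | h | h
  · exact Or.inl h
  · exact Or.inl h
  · exact Or.inr h

/-- A cycle avoiding an edge `e` is connected in `G` minus `e`. -/
lemma cycle_side_reach {e : Sym2 V} {v0 : V} {Z : G.Walk v0 v0} (hZ : e ∉ Z.edges) :
    ∀ y ∈ Z.support, (G \ fromEdgeSet {e}).Reachable v0 y := by
  have hsub : ∀ e' ∈ Z.edges, e' ∈ (G \ fromEdgeSet {e}).edgeSet := by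
    intro e' he'
    rw [edgeSet_sdiff]
    refine ⟨Z.edges_subset_edgeSet he', ?_⟩
    rw [edgeSet_fromEdgeSet]
    rintro ⟨h1, -⟩
    rw [Set.mem_singleton_iff] at h1
    exact hZ (h1 ▸ he')
  intro y hy
  rw [← Walk.support_transfer _ hsub] at hy
  exact ⟨(Z.transfer _ hsub).takeUntil y hy⟩

section Bridge

variable [Fintype V] [DecidableRel G.Adj]

/-- Auxiliary for the bridge case: a third big vertex on the `u`-side is impossible. -/
lemma bridge_case_side (hconn : G.Connected) (hdeg : ∀ y : V, 2 ≤ G.degree y)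
    (hne : G.NoEvenCycles)
    (hocc : G.OddCycleCondition) {u a : V} (hbr : G.IsBridge s(u, a)) {w : V}
    (hw : 3 ≤ G.degree w) (hwu : w ≠ u) (hwa : w ≠ a)
    (hUw : (G \ fromEdgeSet {s(u, a)}).Reachable u w) : False := by
  classical
  have hadj : G.Adj u a := (hbr.reachable_iff_adj).mp (hconn u a)
  have hnr : ¬(G \ fromEdgeSet {s(u, a)}).Reachable u a := (isBridge_iff).mp hbr
  have hcycnot : ∀ ⦃v0 : V⦄ (p : G.Walk v0 v0), p.IsCycle → s(u, a) ∉ p.edges :=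
    (isBridge_iff_forall_cycle_notMem (G.mem_edgeSet.mpr hadj)).mp hbr
  set U : V → Prop := fun y => (G \ fromEdgeSet {s(u, a)}).Reachable u y with hUdef
  set A : V → Prop := fun y => (G \ fromEdgeSet {s(u, a)}).Reachable a y with hAdef
  have hdisj : ∀ y, U y → A y → False := fun y h1 h2 => hnr (h1.trans h2.symm)
  have hcross : ∀ x y, U x → A y → G.Adj x y → x = u ∧ y = a := by
    intro x y hx hy hxy
    by_cases he : s(x, y) = s(u, a)
    · rw [Sym2.eq_iff] at he
      rcases he with ⟨rfl, rfl⟩ | ⟨rfl, rfl⟩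
      · exact ⟨rfl, rfl⟩
      · exact (hdisj x hx (Reachable.refl _)).elim
    · have hadj' : (G \ fromEdgeSet {s(u, a)}).Adj x y := by
        rw [sdiff_adj]
        refine ⟨hxy, ?_⟩
        rw [fromEdgeSet_adj]
        rintro ⟨h1, -⟩
        exact he h1
      exact (hdisj y (hx.trans hadj'.reachable) hy).elim
  have hcover : ∀ y, U y ∨ A y := by
    intro y
    obtain ⟨wk⟩ := hconn.preconnected y u
    rcases reach_one_side (a := a) wk with h | h
    · exact Or.inl h.symm
    · exact Or.inr h.symm
  have hside : ∀ (v0 : V) (Z : G.Walk v0 v0), Z.IsCycle →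
      (∀ y ∈ Z.support, U y) ∨ (∀ y ∈ Z.support, A y) := by
    intro v0 Z hZ
    have hreach := cycle_side_reach (hcycnot Z hZ)
    rcases hcover v0 with h | h
    · exact Or.inl fun y hy => h.trans (hreach y hy)
    · exact Or.inr fun y hy => h.trans (hreach y hy)
  obtain ⟨Cu, hCu⟩ := exists_cycle_through hdeg hocc u
  have hCuU : ∀ y ∈ Cu.support, U y := by
    rcases hside u Cu hCu with h | h
    · exact h
    · exact ((hdisj u (Reachable.refl _) (h u Cu.start_mem_support)).elim)
  obtain ⟨Da, hDa⟩ := exists_cycle_through hdeg hocc a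
  have hDaA : ∀ y ∈ Da.support, A y := by
    rcases hside a Da hDa with h | h
    · exact ((hdisj a (h a Da.start_mem_support) (Reachable.refl _)).elim)
    · exact h
  have hallU : ∀ (v0 : V) (Z : G.Walk v0 v0), Z.IsCycle → (∀ y ∈ Z.support, U y) →
      u ∈ Z.support := by
    intro v0 Z hZ hZU
    rcases hocc Z Da hZ hDa with ⟨y, hy1, hy2⟩ | ⟨x, y, hx, hy, hxy⟩
    · exact (hdisj y (hZU y hy1) (hDaA y hy2)).elim
    · exact (hcross x y (hZU x hx) (hDaA y hy) hxy).1 ▸ hx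
  have hallA : ∀ (v0 : V) (Z : G.Walk v0 v0), Z.IsCycle → (∀ y ∈ Z.support, A y) →
      a ∈ Z.support := by
    intro v0 Z hZ hZA
    rcases hocc Cu Z hCu hZ with ⟨y, hy1, hy2⟩ | ⟨x, y, hx, hy, hxy⟩
    · exact (hdisj y (hCuU y hy1) (hZA y hy2)).elim
    · exact (hcross x y (hCuU x hx) (hZA y hy) hxy).2 ▸ hy
  -- the big vertex w on the U side
  obtain ⟨Cw, hCw⟩ := exists_cycle_through hdeg hocc w
  have hCwU : ∀ y ∈ Cw.support, U y := by
    rcases hside w Cw hCw with h | h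
    · exact h
    · exact ((hdisj w hUw (h w Cw.start_mem_support)).elim)
  have hu_in : u ∈ Cw.support := hallU w Cw hCw hCwU
  obtain ⟨c, hwc, hce⟩ := exists_extra_edge hCw hw
  by_cases hbc : G.IsBridge s(w, c)
  · -- the extra edge at w is a bridge
    have hnr2 : ¬(G \ fromEdgeSet {s(w, c)}).Reachable w c := (isBridge_iff).mp hbc
    have hcyc2 : ∀ ⦃v0 : V⦄ (p : G.Walk v0 v0), p.IsCycle → s(w, c) ∉ p.edges :=
      (isBridge_iff_forall_cycle_notMem (G.mem_edgeSet.mpr hwc)).mp hbc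
    have hCw_reach : (G \ fromEdgeSet {s(w, c)}).Reachable w u :=
      cycle_side_reach (hcyc2 Cw hCw) u hu_in
    obtain ⟨Zc, hZc⟩ := exists_cycle_through hdeg hocc c
    have hZc_side : ∀ y ∈ Zc.support, (G \ fromEdgeSet {s(w, c)}).Reachable c y :=
      cycle_side_reach (hcyc2 Zc hZc)
    rcases hside c Zc hZc with hZU | hZA
    · have huZ := hallU c Zc hZc hZU
      exact hnr2 (hCw_reach.trans (hZc_side u huZ).symm)
    · have haZ := hallA c Zc hZc hZA
      have hca : (G \ fromEdgeSet {s(w, c)}).Reachable c a := hZc_side a haZ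
      by_cases hee : s(u, a) = s(w, c)
      · rw [Sym2.eq_iff] at hee
        rcases hee with ⟨h1, -⟩ | ⟨-, h2⟩
        · exact hwu h1.symm
        · exact hwa h2.symm
      · have hadj2 : (G \ fromEdgeSet {s(w, c)}).Adj u a := by
          rw [sdiff_adj]
          refine ⟨hadj, ?_⟩
          rw [fromEdgeSet_adj]
          rintro ⟨h1, -⟩
          exact hee h1
        exact hnr2 (hCw_reach.trans (hadj2.reachable.trans hca.symm))
  · -- the extra edge lies on a cycle E
    have hex : ∃ (v0 : V) (p : G.Walk v0 v0), p.IsCycle ∧ s(w, c) ∈ p.edges := by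
      by_contra hno
      push_neg at hno
      exact hbc ((isBridge_iff_forall_cycle_notMem (G.mem_edgeSet.mpr hwc)).mpr
        (fun v0 p hp => hno v0 p hp))
    obtain ⟨v0, E, hE, heE⟩ := hex
    have hwE : w ∈ E.support := E.fst_mem_support_of_mem_edges heE
    have hEU : ∀ y ∈ E.support, U y := by
      rcases hside v0 E hE with h | h
      · exact h
      · exact ((hdisj w hUw (h w hwE)).elim)
    have huE : u ∈ E.support := hallU v0 E hE hEU
    exact two_shared_contra hne hE hCw huE hu_in hwE Cw.start_mem_support
      (Ne.symm hwu) ⟨s(w, c), heE, hce⟩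

/-- If a big vertex is incident to a bridge, every big vertex is one of its two ends. -/
lemma bridge_case (hconn : G.Connected) (hdeg : ∀ y : V, 2 ≤ G.degree y)
    (hne : G.NoEvenCycles) (hocc : G.OddCycleCondition) {u a : V}
    (hbr : G.IsBridge s(u, a)) {w : V} (hw : 3 ≤ G.degree w) : w = u ∨ w = a := by
  by_contra hcon
  push_neg at hcon
  obtain ⟨h1, h2⟩ := hcon
  obtain ⟨wk⟩ := hconn.preconnected w u
  rcases reach_one_side (a := a) wk with h | h
  · exact bridge_case_side hconn hdeg hne hocc hbr hw h1 h2 h.symm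
  · have heq : s(a, u) = s(u, a) := Sym2.eq_swap
    have hbr' : G.IsBridge s(a, u) := by rw [heq]; exact hbr
    have h' : (G \ fromEdgeSet {s(a, u)}).Reachable a w := by rw [heq]; exact h.symm
    exact bridge_case_side hconn hdeg hne hocc hbr' hw h2 h1 h'

end Bridge

/-- Intersection of two cycles is at most one vertex, given a vertex witness of
distinctness. -/
lemma share_le_one_of_notmem (hne : G.NoEvenCycles) {f0 x0 c : V} {F : G.Walk f0 f0}
    {X : G.Walk x0 x0} (hF : F.IsCycle) (hX : X.IsCycle)
    (hcF : c ∈ F.support) (hcX : c ∉ X.support) :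
    ∀ x y, x ∈ F.support → x ∈ X.support → y ∈ F.support → y ∈ X.support → x = y := by
  intro x y hx1 hx2 hy1 hy2
  by_contra hxy
  exact ear_contra hne hF hX hx1 hx2 hy1 hy2 hxy hcF hcX

/-- Intersection of two cycles is at most one vertex, given an edge witness of
distinctness. -/
lemma share_le_one_of_edge (hne : G.NoEvenCycles) {f0 x0 : V} {F : G.Walk f0 f0}
    {X : G.Walk x0 x0} (hF : F.IsCycle) (hX : X.IsCycle)
    (hedge : ∃ e ∈ F.edges, e ∉ X.edges) :
    ∀ x y, x ∈ F.support → x ∈ X.support → y ∈ F.support → y ∈ X.support → x = y := by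
  intro x y hx1 hx2 hy1 hy2
  by_contra hxy
  exact two_shared_contra hne hF hX hx1 hx2 hy1 hy2 hxy hedge

/-- An initial arc of a cycle is a path (including the degenerate case). -/
lemma cycle_arc {γ δ : V} {C : G.Walk γ γ} (hC : C.IsCycle) (hδ : δ ∈ C.support) :
    (C.takeUntil δ hδ).IsPath := by
  rcases eq_or_ne δ γ with rfl | hne
  · have hlen0 : (C.takeUntil δ hδ).length = 0 := by
      by_contra h0
      have hmem := end_mem_tail_support' (C.takeUntil δ hδ) h0
      have hcount := C.count_support_takeUntil_eq_one hδ
      rw [(C.takeUntil δ hδ).support_eq_cons] at hcount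
      rw [List.count_cons_self] at hcount
      have : 1 ≤ (C.takeUntil δ hδ).support.tail.count δ := List.one_le_count_iff.mpr hmem
      omega
    have h1 : (C.takeUntil δ hδ).support.length = 1 := by
      rw [Walk.length_support, hlen0]
    obtain ⟨a, ha⟩ := List.length_eq_one_iff.mp h1
    rw [Walk.isPath_def, ha]
    exact List.nodup_singleton a
  · exact (cycle_split hC hδ hne).1

/-- Build a path between the base points of two once-intersecting cycles joined by the
odd cycle condition. -/
lemma junction_path (hne : G.NoEvenCycles) {α β : V} {CA : G.Walk α α} {CB : G.Walk β β}
    (hCA : CA.IsCycle) (hCB : CB.IsCycle) (hαβ : α ≠ β)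
    (hαB : α ∉ CB.support) (hβA : β ∉ CA.support)
    (hsmall : ∀ t t', t ∈ CA.support → t ∈ CB.support → t' ∈ CA.support →
      t' ∈ CB.support → t = t')
    (hj : (∃ z, z ∈ CA.support ∧ z ∈ CB.support) ∨
      (∃ x y, x ∈ CA.support ∧ y ∈ CB.support ∧ G.Adj x y)) :
    G.Adj α β ∨ ∃ P : G.Walk α β, P.IsPath ∧ 2 ≤ P.length ∧
      (∀ y ∈ P.support, y ∈ CA.support ∨ y ∈ CB.support) ∧
      (∃ m ∈ P.support, (m ∈ CB.support ∧ m ≠ β) ∨ (m ∈ CA.support ∧ m ≠ α)) := by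
  have hCBlen : CB.length ≠ 0 := by have := hCB.three_le_length; omega
  by_cases hint : ∃ z, z ∈ CA.support ∧ z ∈ CB.support
  · -- vertex junction
    obtain ⟨z, hzA, hzB⟩ := hint
    have hzα : z ≠ α := fun h => hαB (h ▸ hzB)
    have hzβ : z ≠ β := fun h => hβA (h ▸ hzA)
    have harc1 : (CA.takeUntil z hzA).IsPath := cycle_arc hCA hzA
    set CBz := CB.rotate _ hzB with hCBzdef
    have hCBz : CBz.IsCycle := hCB.rotate hzB
    have hβz : β ∈ CBz.support := (mem_support_rotate CB hzB hCBlen β).mpr CB.start_mem_support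
    have harc2 : (CBz.takeUntil β hβz).IsPath := cycle_arc hCBz hβz
    have harc2sub : ∀ y ∈ (CBz.takeUntil β hβz).support, y ∈ CB.support := fun y hy =>
      (mem_support_rotate CB hzB hCBlen y).mp (CBz.support_takeUntil_subset hβz hy)
    have harc1sub : ∀ y ∈ (CA.takeUntil z hzA).support, y ∈ CA.support := fun y hy =>
      CA.support_takeUntil_subset hzA hy
    refine Or.inr ⟨(CA.takeUntil z hzA).append (CBz.takeUntil β hβz), ?_, ?_, ?_, ?_⟩
    · apply path_append_path harc1 harc2
      intro y hy hy'
      exact hsmall y z (harc1sub y hy) (harc2sub y hy') hzA hzB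
    · rw [Walk.length_append]
      have l1 : (CA.takeUntil z hzA).length ≠ 0 := length_ne_zero_of_ne _ (Ne.symm hzα)
      have l2 : (CBz.takeUntil β hβz).length ≠ 0 := length_ne_zero_of_ne _ hzβ
      omega
    · intro y hy
      rw [Walk.mem_support_append_iff] at hy
      rcases hy with hy | hy
      · exact Or.inl (harc1sub y hy)
      · exact Or.inr (harc2sub y hy)
    · refine ⟨z, ?_, Or.inl ⟨hzB, hzβ⟩⟩
      rw [Walk.mem_support_append_iff]
      exact Or.inl (CA.takeUntil z hzA).end_mem_support
  · -- edge junction; the cycles are disjoint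
    have hempty : ∀ t, t ∈ CA.support → t ∈ CB.support → False := fun t h1 h2 =>
      hint ⟨t, h1, h2⟩
    rcases hj with ⟨z, hzA, hzB⟩ | ⟨x, y, hxA, hyB, hadj⟩
    · exact (hempty z hzA hzB).elim
    by_cases hboth : x = α ∧ y = β
    · exact Or.inl (hboth.1 ▸ hboth.2 ▸ hadj)
    have harc1 : (CA.takeUntil x hxA).IsPath := cycle_arc hCA hxA
    set CBy := CB.rotate _ hyB with hCBydef
    have hCBy : CBy.IsCycle := hCB.rotate hyB
    have hβy : β ∈ CBy.support := (mem_support_rotate CB hyB hCBlen β).mpr CB.start_mem_support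
    have harc2 : (CBy.takeUntil β hβy).IsPath := cycle_arc hCBy hβy
    have harc2sub : ∀ t ∈ (CBy.takeUntil β hβy).support, t ∈ CB.support := fun t ht =>
      (mem_support_rotate CB hyB hCBlen t).mp (CBy.support_takeUntil_subset hβy ht)
    have harc1sub : ∀ t ∈ (CA.takeUntil x hxA).support, t ∈ CA.support := fun t ht =>
      CA.support_takeUntil_subset hxA ht
    have hinner : (Walk.cons hadj (CBy.takeUntil β hβy)).IsPath := by
      rw [Walk.cons_isPath_iff]
      exact ⟨harc2, fun h => hempty x hxA (harc2sub x h)⟩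
    refine Or.inr ⟨(CA.takeUntil x hxA).append (Walk.cons hadj (CBy.takeUntil β hβy)),
      ?_, ?_, ?_, ?_⟩
    · apply path_append_path harc1 hinner
      intro t ht ht'
      rw [Walk.support_cons, List.mem_cons] at ht'
      rcases ht' with rfl | ht'
      · rfl
      · exact (hempty t (harc1sub t ht) (harc2sub t ht')).elim
    · rw [Walk.length_append, Walk.length_cons]
      rcases not_and_or.mp hboth with h | h
      · have := length_ne_zero_of_ne (CA.takeUntil x hxA) (fun he => h he.symm)
        omega
      · have := length_ne_zero_of_ne (CBy.takeUntil β hβy) (fun he => h he)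
        omega
    · intro t ht
      rw [Walk.mem_support_append_iff] at ht
      rcases ht with ht | ht
      · exact Or.inl (harc1sub t ht)
      · rw [Walk.support_cons, List.mem_cons] at ht
        rcases ht with rfl | ht
        · exact Or.inl hxA
        · exact Or.inr (harc2sub t ht)
    · rcases not_and_or.mp hboth with h | h
      · refine ⟨x, ?_, Or.inr ⟨hxA, h⟩⟩
        rw [Walk.mem_support_append_iff]
        exact Or.inl (CA.takeUntil x hxA).end_mem_support
      · refine ⟨y, ?_, Or.inl ⟨hyB, h⟩⟩
        rw [Walk.mem_support_append_iff]
        right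
        rw [Walk.support_cons]
        exact List.mem_cons_of_mem _ (CBy.takeUntil β hβy).start_mem_support


/-- Three cycles pairwise intersecting in distinct single vertices: contradiction. -/
lemma three_cycle_contra (hne : G.NoEvenCycles) {u x0 : V} {A B : G.Walk u u}
    {X : G.Walk x0 x0} (hA : A.IsCycle) (hB : B.IsCycle) (hX : X.IsCycle)
    (hAB : ∀ t, t ∈ A.support → t ∈ B.support → t = u)
    (huX : u ∉ X.support)
    {z w' : V} (hzA : z ∈ A.support) (hzX : z ∈ X.support)
    (hwB : w' ∈ B.support) (hwX : w' ∈ X.support) : False := by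
  have hXlen : X.length ≠ 0 := by have := hX.three_le_length; omega
  have hzu : z ≠ u := fun h => huX (h ▸ hzX)
  have hwu : w' ≠ u := fun h => huX (h ▸ hwX)
  have hzw : z ≠ w' := by
    intro h
    exact hzu (hAB z hzA (h ▸ hwB))
  have hAX : ∀ t t', t ∈ A.support → t ∈ X.support → t' ∈ A.support → t' ∈ X.support →
      t = t' := share_le_one_of_notmem hne hA hX A.start_mem_support huX
  have hBX : ∀ t t', t ∈ B.support → t ∈ X.support → t' ∈ B.support → t' ∈ X.support →
      t = t' := share_le_one_of_notmem hne hB hX B.start_mem_support huX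
  have harc1 : (A.takeUntil z hzA).IsPath := cycle_arc hA hzA
  have harc2 : (B.takeUntil w' hwB).IsPath := cycle_arc hB hwB
  set Xz := X.rotate _ hzX with hXzdef
  have hXz : Xz.IsCycle := hX.rotate hzX
  have hwXz : w' ∈ Xz.support := (mem_support_rotate X hzX hXlen w').mpr hwX
  have harc3 : (Xz.takeUntil w' hwXz).IsPath := cycle_arc hXz hwXz
  have harc3sub : ∀ t ∈ (Xz.takeUntil w' hwXz).support, t ∈ X.support := fun t ht =>
    (mem_support_rotate X hzX hXlen t).mp (Xz.support_takeUntil_subset hwXz ht)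
  have harc1sub : ∀ t ∈ (A.takeUntil z hzA).support, t ∈ A.support := fun t ht =>
    A.support_takeUntil_subset hzA ht
  have harc2sub : ∀ t ∈ (B.takeUntil w' hwB).support, t ∈ B.support := fun t ht =>
    B.support_takeUntil_subset hwB ht
  set P := (A.takeUntil z hzA).reverse.append (B.takeUntil w' hwB) with hPdef
  have hP : P.IsPath := by
    apply path_append_path harc1.reverse harc2
    intro t ht ht'
    rw [Walk.support_reverse, List.mem_reverse] at ht
    exact hAB t (harc1sub t ht) (harc2sub t ht')
  have hPsub : ∀ t ∈ P.support, t ∈ A.support ∨ t ∈ B.support := by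
    intro t ht
    rw [Walk.mem_support_append_iff] at ht
    rcases ht with ht | ht
    · rw [Walk.support_reverse, List.mem_reverse] at ht
      exact Or.inl (harc1sub t ht)
    · exact Or.inr (harc2sub t ht)
  have hPlen : 2 ≤ P.length := by
    rw [Walk.length_append, Walk.length_reverse]
    have l1 := length_ne_zero_of_ne (A.takeUntil z hzA) (Ne.symm hzu)
    have l2 := length_ne_zero_of_ne (B.takeUntil w' hwB) (Ne.symm hwu)
    omega
  have hF : (P.append (Xz.takeUntil w' hwXz).reverse).IsCycle := by
    apply glue_isCycle hP harc3.reverse hzw hPlen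
    intro t ht ht'
    rw [Walk.support_reverse, List.mem_reverse] at ht'
    rcases hPsub t ht with h | h
    · exact Or.inl (hAX t z h (harc3sub t ht') hzA hzX)
    · exact Or.inr (hBX t w' h (harc3sub t ht') hwB hwX)
  have huF : u ∈ (P.append (Xz.takeUntil w' hwXz).reverse).support := by
    rw [Walk.mem_support_append_iff]
    left
    rw [Walk.mem_support_append_iff]
    left
    rw [Walk.support_reverse, List.mem_reverse]
    exact (A.takeUntil z hzA).start_mem_support
  have hwF : w' ∈ (P.append (Xz.takeUntil w' hwXz).reverse).support := by
    rw [Walk.mem_support_append_iff]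
    left
    exact Walk.end_mem_support _
  exact ear_contra hne hF hX (Walk.start_mem_support _) hzX hwF hwX hzw huF huX

/-- Four cycles in matching position: contradiction (or adjacency). -/
lemma K_contra (hne : G.NoEvenCycles) (hocc : G.OddCycleCondition) {u v : V}
    {A B : G.Walk u u} {C D : G.Walk v v}
    (hA : A.IsCycle) (hB : B.IsCycle) (hC : C.IsCycle) (hD : D.IsCycle)
    (huv : u ≠ v) (hnadj : ¬G.Adj u v)
    (hAB : ∀ t, t ∈ A.support → t ∈ B.support → t = u)
    (hCD : ∀ t, t ∈ C.support → t ∈ D.support → t = v)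
    (huC : u ∉ C.support) (huD : u ∉ D.support)
    (hvA : v ∉ A.support) (hvB : v ∉ B.support)
    (hAD : ∀ t, t ∈ A.support → t ∈ D.support → False)
    (hBC : ∀ t, t ∈ B.support → t ∈ C.support → False) : False := by
  have hsmallAC := share_le_one_of_notmem hne hA hC A.start_mem_support huC
  rcases junction_path hne hA hC huv huC hvA hsmallAC (hocc A C hA hC) with
    h | ⟨P1, hP1, hl1, hs1, m1, hm1P, hm1⟩
  · exact hnadj h
  have hsmallBD := share_le_one_of_notmem hne hB hD B.start_mem_support huD
  rcases junction_path hne hB hD huv huD hvB hsmallBD (hocc B D hB hD) with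
    h | ⟨P2, hP2, hl2, hs2, -⟩
  · exact hnadj h
  have hF : (P1.append P2.reverse).IsCycle := by
    apply glue_isCycle hP1 hP2.reverse huv hl1
    intro t ht ht'
    rw [Walk.support_reverse, List.mem_reverse] at ht'
    rcases hs1 t ht with h1 | h1 <;> rcases hs2 t ht' with h2 | h2
    · exact Or.inl (hAB t h1 h2)
    · exact (hAD t h1 h2).elim
    · exact (hBC t h2 h1).elim
    · exact Or.inr (hCD t h1 h2)
  have hvF : v ∈ (P1.append P2.reverse).support := by
    rw [Walk.mem_support_append_iff]
    exact Or.inl P1.end_mem_support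
  have hm1F : m1 ∈ (P1.append P2.reverse).support := by
    rw [Walk.mem_support_append_iff]
    exact Or.inl hm1P
  rcases hm1 with ⟨hm1C, hm1v⟩ | ⟨hm1A, hm1u⟩
  · exact ear_contra hne hF hC hm1F hm1C hvF C.start_mem_support hm1v
      (Walk.start_mem_support _) huC
  · exact ear_contra hne hF hA hm1F hm1A (Walk.start_mem_support _) A.start_mem_support hm1u
      hvF hvA

/-- Two big vertices on a common cycle, with auxiliary cycles: contradiction. -/
lemma common_cycle_contra (hne : G.NoEvenCycles) (hocc : G.OddCycleCondition)
    {u v w0 : V} {W : G.Walk w0 w0} (hW : W.IsCycle) (huW : u ∈ W.support)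
    (hvW : v ∈ W.support) (huv : u ≠ v) (hnadj : ¬G.Adj u v)
    {D : G.Walk u u} {E : G.Walk v v} (hD : D.IsCycle) (hE : E.IsCycle)
    (hDW : ∃ e ∈ D.edges, e ∉ W.edges) (hEW : ∃ e ∈ E.edges, e ∉ W.edges) : False := by
  have hWlen : W.length ≠ 0 := by have := hW.three_le_length; omega
  have hDWs : ∀ t, t ∈ D.support → t ∈ W.support → t = u := fun t h1 h2 =>
    share_le_one_of_edge hne hD hW hDW t u h1 h2 D.start_mem_support huW
  have hEWs : ∀ t, t ∈ E.support → t ∈ W.support → t = v := fun t h1 h2 =>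
    share_le_one_of_edge hne hE hW hEW t v h1 h2 E.start_mem_support hvW
  have hvD : v ∉ D.support := fun h => huv ((hDWs v h hvW).symm)
  have huE : u ∉ E.support := fun h => huv (hEWs u h huW)
  have hsmallDE := share_le_one_of_notmem hne hD hE D.start_mem_support huE
  rcases junction_path hne hD hE huv huE hvD hsmallDE (hocc D E hD hE) with
    h | ⟨P, hP, hl, hs, m, hmP, hm⟩
  · exact hnadj h
  set Wv := W.rotate _ hvW with hWvdef
  have hWv : Wv.IsCycle := hW.rotate hvW
  have huWv : u ∈ Wv.support := (mem_support_rotate W hvW hWlen u).mpr huW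
  have hQ : (Wv.takeUntil u huWv).IsPath := cycle_arc hWv huWv
  have hQsub : ∀ t ∈ (Wv.takeUntil u huWv).support, t ∈ W.support := fun t ht =>
    (mem_support_rotate W hvW hWlen t).mp (Wv.support_takeUntil_subset huWv ht)
  have hF : (P.append (Wv.takeUntil u huWv)).IsCycle := by
    apply glue_isCycle hP hQ huv hl
    intro t ht ht'
    rcases hs t ht with h | h
    · exact Or.inl (hDWs t h (hQsub t ht'))
    · exact Or.inr (hEWs t h (hQsub t ht'))
  have hvF : v ∈ (P.append (Wv.takeUntil u huWv)).support := by
    rw [Walk.mem_support_append_iff]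
    exact Or.inl P.end_mem_support
  have hmF : m ∈ (P.append (Wv.takeUntil u huWv)).support := by
    rw [Walk.mem_support_append_iff]
    exact Or.inl hmP
  have hmW : m ∉ W.support := by
    intro hmem
    rcases hm with ⟨h1, h2⟩ | ⟨h1, h2⟩
    · exact h2 (hEWs m h1 hmem)
    · exact h2 (hDWs m h1 hmem)
  exact ear_contra hne hF hW (Walk.start_mem_support _) huW hvF hvW huv hmF hmW

section Pairwise

variable [Fintype V] [DecidableRel G.Adj]

/-- A second cycle through a big bridge-free vertex, avoiding an edge of a given cycle. -/
lemma second_cycle {u w0 : V} {W : G.Walk w0 w0} (hW : W.IsCycle)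
    (huW : u ∈ W.support) (hu3 : 3 ≤ G.degree u)
    (hnobr : ∀ b, G.Adj u b → ¬G.IsBridge s(u, b)) :
    ∃ D : G.Walk u u, D.IsCycle ∧ ∃ e ∈ D.edges, e ∉ W.edges := by
  have hWlen : W.length ≠ 0 := by have := hW.three_le_length; omega
  set Wu := W.rotate _ huW with hWudef
  have hWu : Wu.IsCycle := hW.rotate huW
  obtain ⟨b, hub, hbe⟩ := exists_extra_edge hWu hu3
  have hex : ∃ (v0 : V) (p : G.Walk v0 v0), p.IsCycle ∧ s(u, b) ∈ p.edges := by
    by_contra hno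
    push_neg at hno
    exact (hnobr b hub) ((isBridge_iff_forall_cycle_notMem (G.mem_edgeSet.mpr hub)).mpr
      (fun v0 p hp => hno v0 p hp))
  obtain ⟨v0, p, hp, hep⟩ := hex
  have hup : u ∈ p.support := p.fst_mem_support_of_mem_edges hep
  refine ⟨p.rotate _ hup, hp.rotate hup, s(u, b), ?_, ?_⟩
  · exact (p.rotate_edges _ hup).mem_iff.mpr hep
  · intro hmem
    exact hbe ((W.rotate_edges _ huW).mem_iff.mpr hmem)

/-- Two big vertices in a bridge-free compact graph are adjacent. -/
lemma pairwise_adj (hconn : G.Connected) (hdeg : ∀ y : V, 2 ≤ G.degree y)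
    (hne : G.NoEvenCycles) (hocc : G.OddCycleCondition)
    (hnobr : ∀ y b : V, ¬G.IsBridge s(y, b))
    {u v : V} (hu3 : 3 ≤ G.degree u) (hv3 : 3 ≤ G.degree v) (huv : u ≠ v) : G.Adj u v := by
  by_contra hnadj
  by_cases hcom : ∃ (w0 : V) (W : G.Walk w0 w0), W.IsCycle ∧ u ∈ W.support ∧ v ∈ W.support
  · obtain ⟨w0, W, hW, huW, hvW⟩ := hcom
    obtain ⟨D, hD, hDW⟩ := second_cycle hW huW hu3 (fun b _ => hnobr u b)
    obtain ⟨E, hE, hEW⟩ := second_cycle hW hvW hv3 (fun b _ => hnobr v b)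
    exact common_cycle_contra hne hocc hW huW hvW huv hnadj hD hE hDW hEW
  · push_neg at hcom
    obtain ⟨A, hA⟩ := exists_cycle_through hdeg hocc u
    obtain ⟨B, hB, hBA⟩ := second_cycle hA A.start_mem_support hu3 (fun b _ => hnobr u b)
    obtain ⟨C, hC⟩ := exists_cycle_through hdeg hocc v
    obtain ⟨D, hD, hDC⟩ := second_cycle hC C.start_mem_support hv3 (fun b _ => hnobr v b)
    have hvA : v ∉ A.support := hcom u A hA A.start_mem_support
    have hvB : v ∉ B.support := hcom u B hB B.start_mem_support
    have huC : u ∉ C.support := fun h => (hcom v C hC h) C.start_mem_support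
    have huD : u ∉ D.support := fun h => (hcom v D hD h) D.start_mem_support
    have hAB : ∀ t, t ∈ A.support → t ∈ B.support → t = u := fun t h1 h2 =>
      share_le_one_of_edge hne hB hA hBA t u h2 h1 B.start_mem_support A.start_mem_support
    have hCD : ∀ t, t ∈ C.support → t ∈ D.support → t = v := fun t h1 h2 =>
      share_le_one_of_edge hne hD hC hDC t v h2 h1 D.start_mem_support C.start_mem_support
    by_cases hAD : ∃ t, t ∈ A.support ∧ t ∈ D.support
    · obtain ⟨t1, ht1A, ht1D⟩ := hAD
      by_cases hAC : ∃ t, t ∈ A.support ∧ t ∈ C.support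
      · obtain ⟨t2, ht2A, ht2C⟩ := hAC
        exact three_cycle_contra hne hC hD hA hCD hvA ht2C ht2A ht1D ht1A
      by_cases hBD : ∃ t, t ∈ B.support ∧ t ∈ D.support
      · obtain ⟨t2, ht2B, ht2D⟩ := hBD
        exact three_cycle_contra hne hA hB hD hAB huD ht1A ht1D ht2B ht2D
      push_neg at hAC hBD
      exact K_contra hne hocc hA hB hD hC huv hnadj hAB (fun t h1 h2 => hCD t h2 h1)
        huD huC hvA hvB (fun t h1 h2 => hAC t h1 h2) (fun t h1 h2 => hBD t h1 h2)
    · push_neg at hAD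
      by_cases hBC : ∃ t, t ∈ B.support ∧ t ∈ C.support
      · obtain ⟨t1, ht1B, ht1C⟩ := hBC
        by_cases hAC : ∃ t, t ∈ A.support ∧ t ∈ C.support
        · obtain ⟨t2, ht2A, ht2C⟩ := hAC
          exact three_cycle_contra hne hA hB hC hAB huC ht2A ht2C ht1B ht1C
        by_cases hBD : ∃ t, t ∈ B.support ∧ t ∈ D.support
        · obtain ⟨t2, ht2B, ht2D⟩ := hBD
          exact three_cycle_contra hne hC hD hB hCD hvB ht1C ht1B ht2D ht2B
        push_neg at hAC hBD
        exact K_contra hne hocc hA hB hD hC huv hnadj hAB (fun t h1 h2 => hCD t h2 h1)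
          huD huC hvA hvB (fun t h1 h2 => hAC t h1 h2) (fun t h1 h2 => hBD t h1 h2)
      · push_neg at hBC
        exact K_contra hne hocc hA hB hC hD huv hnadj hAB hCD huC huD hvA hvB hAD hBC

end Pairwise

end CompactAux

/-- A compact graph has at most three vertices of degree at least 3. -/
theorem stmt6 {V : Type*} [Fintype V] (G : SimpleGraph V) [DecidableRel G.Adj]
    (hG : G.IsCompact) :
    {v : V | 3 ≤ G.degree v}.ncard ≤ 3 := by
  classical
  obtain ⟨hconn, hdeg, hne, hocc⟩ := hG
  by_cases hbr : ∃ y b : V, G.IsBridge s(y, b)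
  · obtain ⟨y, b, hb⟩ := hbr
    have hsub : {v : V | 3 ≤ G.degree v} ⊆ {y, b} := by
      intro w hw
      rcases CompactAux.bridge_case hconn hdeg hne hocc hb hw with h | h
      · exact Or.inl h
      · exact Or.inr h
    calc {v : V | 3 ≤ G.degree v}.ncard ≤ ({y, b} : Set V).ncard :=
          Set.ncard_le_ncard hsub (Set.toFinite _)
      _ ≤ 2 := by
          rcases eq_or_ne y b with rfl | hyb
          · simp
          · rw [Set.ncard_pair hyb]
      _ ≤ 3 := by omega
  · push_neg at hbr
    have hadjall : ∀ u v : V, 3 ≤ G.degree u → 3 ≤ G.degree v → u ≠ v → G.Adj u v :=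
      fun u v hu hv huv => CompactAux.pairwise_adj hconn hdeg hne hocc hbr hu hv huv
    by_contra hcard
    push_neg at hcard
    have h4 : 4 ≤ {v : V | 3 ≤ G.degree v}.toFinset.card := by
      have := hcard
      rwa [Set.ncard_eq_toFinset_card'] at this
    set F : Finset V := {v : V | 3 ≤ G.degree v}.toFinset with hF
    obtain ⟨a, b, c, ha, hb, hc, hab, hac, hbc⟩ := Finset.two_lt_card_iff.mp
      (by omega : 2 < F.card)
    have hrest : 0 < (((F.erase a).erase b).erase c).card := by
      have h2 := Finset.card_erase_of_mem ha
      have h3 := Finset.card_erase_of_mem (Finset.mem_erase.mpr ⟨Ne.symm hab, hb⟩)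
      have h5 := Finset.card_erase_of_mem (Finset.mem_erase.mpr ⟨Ne.symm hbc,
        Finset.mem_erase.mpr ⟨Ne.symm hac, hc⟩⟩)
      omega
    obtain ⟨d, hd⟩ := Finset.card_pos.mp hrest
    rw [Finset.mem_erase, Finset.mem_erase, Finset.mem_erase] at hd
    obtain ⟨hdc, hdb, hda, hdS⟩ := hd
    have hmem : ∀ x, x ∈ F → 3 ≤ G.degree x := by
      intro x hx
      rw [hF, Set.mem_toFinset] at hx
      exact hx
    have da := hmem a ha
    have db := hmem b hb
    have dc := hmem c hc
    have dd := hmem d hdS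
    have hab' : G.Adj a b := hadjall a b da db hab
    have hbc' : G.Adj b c := hadjall b c db dc hbc
    have hcd' : G.Adj c d := hadjall c d dc dd (Ne.symm hdc)
    have hda' : G.Adj d a := hadjall d a dd da hda
    have e1 : s(a, b) ≠ s(b, c) := by
      rw [Ne, Sym2.eq_iff]
      rintro (⟨rfl, -⟩ | ⟨h1, -⟩)
      · exact hab rfl
      · exact hac h1
    have e2 : s(a, b) ≠ s(c, d) := by
      rw [Ne, Sym2.eq_iff]
      rintro (⟨h1, -⟩ | ⟨h1, -⟩)
      · exact hac h1
      · exact hda h1.symm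
    have e3 : s(a, b) ≠ s(d, a) := by
      rw [Ne, Sym2.eq_iff]
      rintro (⟨h1, -⟩ | ⟨-, h2⟩)
      · exact hda h1.symm
      · exact hdb h2.symm
    have e4 : s(b, c) ≠ s(c, d) := by
      rw [Ne, Sym2.eq_iff]
      rintro (⟨h1, -⟩ | ⟨h1, -⟩)
      · exact hbc h1
      · exact hdb h1.symm
    have e5 : s(b, c) ≠ s(d, a) := by
      rw [Ne, Sym2.eq_iff]
      rintro (⟨h1, -⟩ | ⟨h1, -⟩)
      · exact hdb h1.symm
      · exact hab h1.symm
    have e6 : s(c, d) ≠ s(d, a) := by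
      rw [Ne, Sym2.eq_iff]
      rintro (⟨h1, -⟩ | ⟨h1, -⟩)
      · exact hdc h1.symm
      · exact hac h1.symm
    set cyc : G.Walk a a := Walk.cons hab' (Walk.cons hbc' (Walk.cons hcd'
      (Walk.cons hda' Walk.nil))) with hcyc
    have hcyccyc : cyc.IsCycle := by
      rw [Walk.isCycle_def, Walk.isTrail_def]
      refine ⟨?_, ?_, ?_⟩
      · simp only [hcyc, Walk.edges_cons, Walk.edges_nil]
        simp only [List.nodup_cons, List.mem_cons, List.not_mem_nil, or_false,
          List.mem_singleton, List.nodup_nil, and_true]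
        push_neg
        exact ⟨⟨e1, e2, e3⟩, ⟨e4, e5⟩, e6, trivial⟩
      · simp [hcyc]
      · simp only [hcyc, Walk.support_cons, Walk.support_nil, List.tail_cons]
        simp only [List.nodup_cons, List.mem_cons, List.not_mem_nil, or_false,
          List.mem_singleton, List.nodup_nil, and_true]
        push_neg
        exact ⟨⟨hbc, fun h => hdb h.symm, fun h => hab h.symm⟩,
          ⟨fun h => hdc h.symm, fun h => hac h.symm⟩, fun h => hda h, trivial⟩
    have hlen4 : cyc.length = 4 := by simp [hcyc]
    exact (hne cyc hcyccyc) (by rw [hlen4]; exact ⟨2, rfl⟩)
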